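/- arXiv:2401.07091 — 3 statements merged into one kernel-verified Lean document; each statement's English description precedes it below -/
import Mathlib

section
/- Let C' be a clustering of X into at least three groups, let T' be a minimum spanning tree of G_{C'}, and let C'_i, C'_j be two groups of C' with spacing(C'_i, C'_j) = Min-Sp(C') (so that the edge C'_iC'_j, being the minimum-weight edge of G_{C'}, belongs to T'). Let C^a be the clustering obtained from C' by merging C'_i and C'_j into the single group C'_i ∪ C'_j. Then the tree T^a obtained from T' by contracting the edge between C'_i and C'_j (identifying these two vertices with the vertex C'_i ∪ C'_j, and regarding the resulting edges as edges of G_{C^a} with the weights of G_{C^a}) is a minimum spanning tree of G_{C^a}. -/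
open scoped Classical

namespace ClusterSpacing

variable {X : Type*}

/-- The spacing between two groups: the minimum (infimum) distance between a
point of `A` and a point of `B`. -/
noncomputable def spacing (dist : X → X → ℝ) (A B : Set X) : ℝ :=
  sInf {d : ℝ | ∃ x ∈ A, ∃ y ∈ B, d = dist x y}

/-- The weight of an (unordered) edge between two groups. For symmetric `dist`
this coincides with `spacing`. -/
noncomputable def edgeWeight (dist : X → X → ℝ) : Sym2 (Set X) → ℝ :=
  Sym2.lift ⟨fun A B =>
    sInf ({d : ℝ | ∃ x ∈ A, ∃ y ∈ B, d = dist x y} ∪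
          {d : ℝ | ∃ x ∈ B, ∃ y ∈ A, d = dist x y}),
    fun A B => by beta_reduce; rw [Set.union_comm]⟩

/-- A clustering of `X`: a partition of `X` into nonempty groups. -/
def IsClustering (𝒞 : Set (Set X)) : Prop :=
  (∀ A ∈ 𝒞, A.Nonempty) ∧ ⋃₀ 𝒞 = Set.univ ∧
    ∀ A ∈ 𝒞, ∀ B ∈ 𝒞, A ≠ B → Disjoint A B

/-- The minimum spacing of a clustering: the minimum spacing over pairs of
distinct groups. -/
noncomputable def MinSp (dist : X → X → ℝ) (𝒞 : Set (Set X)) : ℝ :=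
  sInf {d : ℝ | ∃ A ∈ 𝒞, ∃ B ∈ 𝒞, A ≠ B ∧ d = spacing dist A B}

/-- Total weight of (the edges of) a graph on the groups of a clustering. -/
noncomputable def treeCost (dist : X → X → ℝ) (𝒞 : Set (Set X))
    (T : SimpleGraph {A : Set X // A ∈ 𝒞}) : ℝ :=
  ∑ᶠ e ∈ T.edgeSet, edgeWeight dist (Sym2.map Subtype.val e)

/-- The MST spacing of a clustering: the minimum, over all spanning trees of the
complete graph on the groups, of the total edge weight. -/
noncomputable def MSTSp (dist : X → X → ℝ) (𝒞 : Set (Set X)) : ℝ :=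
  sInf {c : ℝ | ∃ T : SimpleGraph {A : Set X // A ∈ 𝒞}, T.IsTree ∧ treeCost dist 𝒞 T = c}

/-- `T` is a minimum spanning tree of the complete graph `G_𝒞` on the groups of `𝒞`. -/
def IsMST (dist : X → X → ℝ) (𝒞 : Set (Set X))
    (T : SimpleGraph {A : Set X // A ∈ 𝒞}) : Prop :=
  T.IsTree ∧ ∀ T' : SimpleGraph {A : Set X // A ∈ 𝒞}, T'.IsTree →
    treeCost dist 𝒞 T ≤ treeCost dist 𝒞 T'

/-- `SingleLinkage dist t 𝒟` holds iff `𝒟` is the collection of groups present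
after `t` merging steps of the single-linkage algorithm. -/
inductive SingleLinkage (dist : X → X → ℝ) : ℕ → Set (Set X) → Prop
  | zero : SingleLinkage dist 0 {A : Set X | ∃ x : X, A = {x}}
  | succ (t : ℕ) (𝒟 : Set (Set X)) (A B : Set X) :
      SingleLinkage dist t 𝒟 → A ∈ 𝒟 → B ∈ 𝒟 → A ≠ B →
      (∀ A' ∈ 𝒟, ∀ B' ∈ 𝒟, A' ≠ B' → spacing dist A B ≤ spacing dist A' B') →
      SingleLinkage dist (t + 1) (insert (A ∪ B) (𝒟 \ {A, B}))

/-- The list of edge weights of a graph on the groups of a clustering, sorted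
in nondecreasing order. -/
noncomputable def edgeWeightsSorted [Fintype X] (dist : X → X → ℝ) (𝒞 : Set (Set X))
    (T : SimpleGraph {A : Set X // A ∈ 𝒞}) : List ℝ :=
  Multiset.sort
    ((T.edgeSet.toFinite.toFinset.val).map (fun e => edgeWeight dist (Sym2.map Subtype.val e))) (· ≤ ·)

section Graph
variable {V : Type*}

lemma reach_of_walk {G H : SimpleGraph V}
    (h : ∀ u v, G.Adj u v → H.Reachable u v) {u v : V} (p : G.Walk u v) :
    H.Reachable u v := by
  induction p with
  | nil => exact SimpleGraph.Reachable.refl _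
  | cons hadj p ih => exact (h _ _ hadj).trans ih

lemma connected_of_forall_adj {G H : SimpleGraph V} (hG : G.Connected)
    (h : ∀ u v, G.Adj u v → H.Reachable u v) : H.Connected := by
  have hne : Nonempty V := hG.nonempty
  rw [SimpleGraph.connected_iff]
  exact ⟨fun u v => reach_of_walk h (hG.preconnected u v).some, hne⟩

lemma exists_spanning_tree [Fintype V] (G : SimpleGraph V) (hG : G.Connected) :
    ∃ T : SimpleGraph V, T ≤ G ∧ T.IsTree := by
  generalize hn : G.edgeFinset.card = n
  induction n using Nat.strong_induction_on generalizing G with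
  | _ n ih =>
    by_cases hac : G.IsAcyclic
    · exact ⟨G, le_refl _, ⟨hG, hac⟩⟩
    · rw [SimpleGraph.isAcyclic_iff_forall_edge_isBridge] at hac
      push_neg at hac
      obtain ⟨e, he, hbr⟩ := hac
      induction e using Sym2.ind with
      | _ v w =>
        rw [SimpleGraph.isBridge_iff] at hbr
        push_neg at hbr
        rw [SimpleGraph.mem_edgeSet] at he
        have hreach := hbr
        set G' : SimpleGraph V := G.deleteEdges {s(v,w)} with hG'def
        have hGeq : G \ SimpleGraph.fromEdgeSet {s(v, w)} = G' := by
          rw [hG'def, SimpleGraph.deleteEdges]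
        have hle : G' ≤ G := SimpleGraph.deleteEdges_le _
        have hconn : G'.Connected := by
          apply connected_of_forall_adj hG
          intro a b hab
          by_cases hf : s(a,b) = s(v,w)
          · rw [Sym2.eq_iff] at hf
            rcases hf with ⟨rfl, rfl⟩ | ⟨rfl, rfl⟩
            · exact hreach
            · exact hreach.symm
          · exact SimpleGraph.Adj.reachable (by
              rw [hG'def, SimpleGraph.deleteEdges_adj]
              exact ⟨hab, by simpa using hf⟩)
        have hcard : G'.edgeFinset.card < n := by
          rw [← hn]
          apply Finset.card_lt_card
          rw [Finset.ssubset_iff_of_subset (SimpleGraph.edgeFinset_mono hle)]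
          refine ⟨s(v,w), ?_, ?_⟩
          · rwa [SimpleGraph.mem_edgeFinset, SimpleGraph.mem_edgeSet]
          · rw [SimpleGraph.mem_edgeFinset, hG'def, SimpleGraph.edgeSet_deleteEdges]
            simp
        obtain ⟨T, hT1, hT2⟩ := ih _ hcard G' hconn (by convert rfl)
        exact ⟨T, hT1.trans hle, hT2⟩

lemma isTree_of_connected_of_card [Fintype V] (G : SimpleGraph V) (hc : G.Connected)
    (hcard : G.edgeFinset.card + 1 = Fintype.card V) : G.IsTree := by
  obtain ⟨T, hle, hT⟩ := exists_spanning_tree G hc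
  have hTcard := hT.card_edgeFinset
  have : T.edgeFinset = G.edgeFinset :=
    Finset.eq_of_subset_of_card_le (SimpleGraph.edgeFinset_mono hle) (by omega)
  rwa [SimpleGraph.edgeFinset_inj.mp this] at hT

lemma tree_ncard [Fintype V] {G : SimpleGraph V} (hG : G.IsTree) :
    G.edgeSet.ncard + 1 = Fintype.card V := by
  have h := hG.card_edgeFinset
  rwa [← Set.ncard_coe_finset, SimpleGraph.coe_edgeFinset] at h

lemma isTree_of_connected_of_ncard [Fintype V] (G : SimpleGraph V) (hc : G.Connected)
    (hcard : G.edgeSet.ncard + 1 = Fintype.card V) : G.IsTree := by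
  apply isTree_of_connected_of_card G hc
  rw [← Set.ncard_coe_finset, SimpleGraph.coe_edgeFinset]
  exact hcard

lemma finsum_mem_insert'' {α : Type*} (f : α → ℝ) {a : α} {s : Set α} (h : a ∉ s)
    (hs : s.Finite) : ∑ᶠ i ∈ insert a s, f i = f a + ∑ᶠ i ∈ s, f i := by
  rw [finsum_mem_eq_finite_toFinset_sum f (hs.insert a), finsum_mem_eq_finite_toFinset_sum f hs,
    Set.Finite.toFinset_insert]
  exact Finset.sum_insert (by simpa using h)

lemma finsum_mem_diff_singleton {α : Type*} (f : α → ℝ) {a : α} {s : Set α} (h : a ∈ s)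
    (hs : s.Finite) : ∑ᶠ i ∈ s, f i = f a + ∑ᶠ i ∈ s \ {a}, f i := by
  have h1 : insert a (s \ {a}) = s := Set.insert_diff_singleton.trans (Set.insert_eq_self.mpr h)
  calc ∑ᶠ i ∈ s, f i = ∑ᶠ i ∈ insert a (s \ {a}), f i := by rw [h1]
    _ = f a + ∑ᶠ i ∈ s \ {a}, f i := finsum_mem_insert'' f (by simp) hs.diff

lemma finsum_mem_le_finsum_mem' {α : Type*} {s : Set α} (hs : s.Finite) (f g : α → ℝ)
    (h : ∀ i ∈ s, f i ≤ g i) : ∑ᶠ i ∈ s, f i ≤ ∑ᶠ i ∈ s, g i := by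
  rw [finsum_mem_eq_finite_toFinset_sum f hs, finsum_mem_eq_finite_toFinset_sum g hs]
  exact Finset.sum_le_sum fun i hi => h i (hs.mem_toFinset.mp hi)

lemma two_paths_absurd {G : SimpleGraph V} (hG : G.IsAcyclic) {x a b : V}
    (h1 : G.Adj x a) (h2 : G.Adj a b) (h3 : G.Adj x b) : False := by
  have hxa := h1.ne
  have hab := h2.ne
  have hxb := h3.ne
  let p1 : G.Path x b := ⟨h3.toWalk, by simp [SimpleGraph.Walk.isPath_def, hxb]⟩
  let p2 : G.Path x b :=
    ⟨SimpleGraph.Walk.cons h1 h2.toWalk, by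
      simp [SimpleGraph.Walk.isPath_def, hxa, hxb, hab]⟩
  have heq := hG.path_unique p1 p2
  have hl : p1.val.length = p2.val.length := by rw [heq]
  simp [p1, p2] at hl

end Graph

section Spacing
variable {X : Type*}

lemma spacing_set_eq (dist : X → X → ℝ) (A B : Set X) :
    {d : ℝ | ∃ x ∈ A, ∃ y ∈ B, d = dist x y} = Set.image2 dist A B := by
  ext d
  simp only [Set.mem_setOf_eq, Set.mem_image2]
  constructor
  · rintro ⟨x, hx, y, hy, rfl⟩; exact ⟨x, hx, y, hy, rfl⟩
  · rintro ⟨x, hx, y, hy, rfl⟩; exact ⟨x, hx, y, hy, rfl⟩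

lemma spacing_set_finite [Finite X] (dist : X → X → ℝ) (A B : Set X) :
    {d : ℝ | ∃ x ∈ A, ∃ y ∈ B, d = dist x y}.Finite := by
  rw [spacing_set_eq]
  exact Set.Finite.image2 _ A.toFinite B.toFinite

lemma spacing_set_nonempty (dist : X → X → ℝ) {A B : Set X} (hA : A.Nonempty)
    (hB : B.Nonempty) : {d : ℝ | ∃ x ∈ A, ∃ y ∈ B, d = dist x y}.Nonempty :=
  ⟨dist hA.choose hB.choose, hA.choose, hA.choose_spec, hB.choose, hB.choose_spec, rfl⟩

lemma spacing_le [Finite X] (dist : X → X → ℝ) {A B : Set X} {x y : X}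
    (hx : x ∈ A) (hy : y ∈ B) : spacing dist A B ≤ dist x y :=
  csInf_le (spacing_set_finite dist A B).bddBelow ⟨x, hx, y, hy, rfl⟩

lemma spacing_exists [Finite X] (dist : X → X → ℝ) {A B : Set X} (hA : A.Nonempty)
    (hB : B.Nonempty) : ∃ x ∈ A, ∃ y ∈ B, spacing dist A B = dist x y :=
  Set.Nonempty.csInf_mem (spacing_set_nonempty dist hA hB) (spacing_set_finite dist A B)

lemma spacing_comm (dist : X → X → ℝ) (hsymm : ∀ x y : X, dist x y = dist y x)
    (A B : Set X) : spacing dist A B = spacing dist B A := by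
  unfold spacing
  congr 1
  ext d
  simp only [Set.mem_setOf_eq]
  constructor
  · rintro ⟨x, hx, y, hy, rfl⟩; exact ⟨y, hy, x, hx, hsymm x y⟩
  · rintro ⟨x, hx, y, hy, rfl⟩; exact ⟨y, hy, x, hx, hsymm x y⟩

lemma edgeWeight_eq (dist : X → X → ℝ) (hsymm : ∀ x y : X, dist x y = dist y x)
    (A B : Set X) : edgeWeight dist s(A, B) = spacing dist A B := by
  have h : {d : ℝ | ∃ x ∈ B, ∃ y ∈ A, d = dist x y} =
      {d : ℝ | ∃ x ∈ A, ∃ y ∈ B, d = dist x y} := by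
    ext d
    simp only [Set.mem_setOf_eq]
    constructor
    · rintro ⟨x, hx, y, hy, rfl⟩; exact ⟨y, hy, x, hx, hsymm x y⟩
    · rintro ⟨x, hx, y, hy, rfl⟩; exact ⟨y, hy, x, hx, hsymm x y⟩
  show sInf _ = _
  rw [h, Set.union_self]
  rfl

lemma spacing_union_right [Finite X] (dist : X → X → ℝ) {A B C : Set X}
    (hA : A.Nonempty) (hB : B.Nonempty) (hC : C.Nonempty) :
    spacing dist A (B ∪ C) = min (spacing dist A B) (spacing dist A C) := by
  have hset : {d : ℝ | ∃ x ∈ A, ∃ y ∈ B ∪ C, d = dist x y} =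
      {d : ℝ | ∃ x ∈ A, ∃ y ∈ B, d = dist x y} ∪
      {d : ℝ | ∃ x ∈ A, ∃ y ∈ C, d = dist x y} := by
    ext d
    simp only [Set.mem_setOf_eq, Set.mem_union]
    constructor
    · rintro ⟨x, hx, y, hy | hy, rfl⟩
      · exact Or.inl ⟨x, hx, y, hy, rfl⟩
      · exact Or.inr ⟨x, hx, y, hy, rfl⟩
    · rintro (⟨x, hx, y, hy, rfl⟩ | ⟨x, hx, y, hy, rfl⟩)
      · exact ⟨x, hx, y, Or.inl hy, rfl⟩
      · exact ⟨x, hx, y, Or.inr hy, rfl⟩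
  unfold spacing
  rw [hset]
  exact csInf_union (spacing_set_finite dist A B).bddBelow (spacing_set_nonempty dist hA hB)
    (spacing_set_finite dist A C).bddBelow (spacing_set_nonempty dist hA hC)

end Spacing

theorem contraction_of_min_edge_is_mst {X : Type*} [Fintype X] (dist : X → X → ℝ)
    (hsymm : ∀ x y : X, dist x y = dist y x)
    (hpos : ∀ x y : X, x ≠ y → 0 < dist x y)
    (hdistinct : ∀ x y x' y' : X, x ≠ y → x' ≠ y' → dist x y = dist x' y' →
      (x = x' ∧ y = y') ∨ (x = y' ∧ y = x'))
    (𝒞' : Set (Set X)) (h𝒞' : IsClustering 𝒞') (h𝒞'card : 3 ≤ 𝒞'.ncard)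
    (T' : SimpleGraph {A : Set X // A ∈ 𝒞'}) (hT' : IsMST dist 𝒞' T')
    (Ci Cj : Set X) (hCi : Ci ∈ 𝒞') (hCj : Cj ∈ 𝒞') (hij : Ci ≠ Cj)
    (hmin : spacing dist Ci Cj = MinSp dist 𝒞')
    (𝒞a : Set (Set X)) (h𝒞a : 𝒞a = insert (Ci ∪ Cj) (𝒞' \ {Ci, Cj}))
    (Ta : SimpleGraph {A : Set X // A ∈ 𝒞a})
    (hTa : ∀ u v : {A : Set X // A ∈ 𝒞a}, Ta.Adj u v ↔ u ≠ v ∧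
      ∃ u' v' : {A : Set X // A ∈ 𝒞'}, T'.Adj u' v' ∧
        (if u'.val = Ci ∨ u'.val = Cj then Ci ∪ Cj else u'.val) = u.val ∧
        (if v'.val = Ci ∨ v'.val = Cj then Ci ∪ Cj else v'.val) = v.val) :
    IsMST dist 𝒞a Ta := by
  -- basic setup
  have hfin : Finite X := inferInstance
  have hCine : Ci.Nonempty := h𝒞'.1 Ci hCi
  have hCjne : Cj.Nonempty := h𝒞'.1 Cj hCj
  have hdisj : ∀ A ∈ 𝒞', ∀ B ∈ 𝒞', A ≠ B → Disjoint A B := h𝒞'.2.2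
  have hpoint : ∀ A ∈ 𝒞', ∀ B ∈ 𝒞', ∀ x : X, x ∈ A → x ∈ B → A = B := by
    intro A hA B hB x hxA hxB
    by_contra hne
    exact (hdisj A hA B hB hne).ne_of_mem hxA hxB rfl
  have hmne : ∀ A ∈ 𝒞', Ci ∪ Cj ≠ A := by
    intro A hA hEq
    obtain ⟨x, hx⟩ := hCine
    obtain ⟨y, hy⟩ := hCjne
    have hxA : x ∈ A := hEq ▸ Or.inl hx
    have hyA : y ∈ A := hEq ▸ Or.inr hy
    have hACi : A = Ci := hpoint A hA Ci hCi x hxA hx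
    have hACj : A = Cj := hpoint A hA Cj hCj y hyA hy
    exact hij (hACi ▸ hACj ▸ rfl)
  have hmnot : Ci ∪ Cj ∉ 𝒞' := fun h => hmne _ h rfl
  have hmem𝒞a : ∀ A : Set X, A ∈ 𝒞a ↔ A = Ci ∪ Cj ∨ (A ∈ 𝒞' ∧ A ≠ Ci ∧ A ≠ Cj) := by
    intro A
    rw [h𝒞a]
    simp only [Set.mem_insert_iff, Set.mem_diff, Set.mem_singleton_iff]
    tauto
  have hm𝒞a : Ci ∪ Cj ∈ 𝒞a := (hmem𝒞a _).mpr (Or.inl rfl)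
  set ci : {A : Set X // A ∈ 𝒞'} := ⟨Ci, hCi⟩ with hci
  set cj : {A : Set X // A ∈ 𝒞'} := ⟨Cj, hCj⟩ with hcj
  set mv : {A : Set X // A ∈ 𝒞a} := ⟨Ci ∪ Cj, hm𝒞a⟩ with hmv
  set φ : {A : Set X // A ∈ 𝒞'} → {A : Set X // A ∈ 𝒞a} := fun u =>
    if h : u.val = Ci ∨ u.val = Cj then mv
    else ⟨u.val, (hmem𝒞a _).mpr (Or.inr ⟨u.2, fun h1 => h (Or.inl h1), fun h2 => h (Or.inr h2)⟩)⟩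
    with hφ
  have hφval : ∀ u : {A : Set X // A ∈ 𝒞'}, (φ u).val = if u.val = Ci ∨ u.val = Cj then Ci ∪ Cj else u.val := by
    intro u
    by_cases h : u.val = Ci ∨ u.val = Cj <;> simp [hφ, h, hmv]
  have hφci : φ ci = mv := by simp [hφ, hci]
  have hφcj : φ cj = mv := by simp [hφ, hcj]
  have hφeq : ∀ u v : {A : Set X // A ∈ 𝒞'}, φ u = φ v → u = v ∨ ((u = ci ∨ u = cj) ∧ (v = ci ∨ v = cj)) := by
    intro u v huv
    have hvals : (φ u).val = (φ v).val := by rw [huv]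
    rw [hφval u, hφval v] at hvals
    by_cases hu : u.val = Ci ∨ u.val = Cj <;> by_cases hv : v.val = Ci ∨ v.val = Cj
    · refine Or.inr ⟨?_, ?_⟩
      · rcases hu with h | h
        · exact Or.inl (Subtype.ext h)
        · exact Or.inr (Subtype.ext h)
      · rcases hv with h | h
        · exact Or.inl (Subtype.ext h)
        · exact Or.inr (Subtype.ext h)
    · rw [if_pos hu, if_neg hv] at hvals
      exact absurd hvals (hmne v.val v.2)
    · rw [if_neg hu, if_pos hv] at hvals
      exact absurd hvals.symm (hmne u.val u.2)
    · rw [if_neg hu, if_neg hv] at hvals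
      exact Or.inl (Subtype.ext hvals)
  have hφsurj : ∀ a : {A : Set X // A ∈ 𝒞a}, ∃ u : {A : Set X // A ∈ 𝒞'}, φ u = a := by
    intro a
    rcases (hmem𝒞a a.val).mp a.2 with h | ⟨h1, h2, h3⟩
    · exact ⟨ci, by rw [hφci]; exact Subtype.ext h.symm⟩
    · refine ⟨⟨a.val, h1⟩, Subtype.ext ?_⟩
      rw [hφval, if_neg (by push_neg; exact ⟨h2, h3⟩)]
  have hTa' : ∀ u v : {A : Set X // A ∈ 𝒞a}, Ta.Adj u v ↔ u ≠ v ∧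
      ∃ u' v' : {A : Set X // A ∈ 𝒞'}, T'.Adj u' v' ∧ φ u' = u ∧ φ v' = v := by
    intro u v
    rw [hTa u v]
    apply and_congr_right'
    apply exists_congr; intro u'; apply exists_congr; intro v'
    apply and_congr_right'
    rw [← hφval u', ← hφval v']
    constructor
    · rintro ⟨h1, h2⟩; exact ⟨Subtype.ext h1, Subtype.ext h2⟩
    · rintro ⟨h1, h2⟩; exact ⟨congrArg Subtype.val h1, congrArg Subtype.val h2⟩
  -- weights
  set w' : Sym2 {A : Set X // A ∈ 𝒞'} → ℝ := fun e => edgeWeight dist (Sym2.map Subtype.val e) with hw'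
  set wa : Sym2 {A : Set X // A ∈ 𝒞a} → ℝ := fun e => edgeWeight dist (Sym2.map Subtype.val e) with hwa
  have hw'sp : ∀ u v : {A : Set X // A ∈ 𝒞'}, w' s(u, v) = spacing dist u.val v.val := by
    intro u v
    rw [hw']
    simp only [Sym2.map_pair_eq]
    exact edgeWeight_eq dist hsymm _ _
  have hwasp : ∀ u v : {A : Set X // A ∈ 𝒞a}, wa s(u, v) = spacing dist u.val v.val := by
    intro u v
    rw [hwa]
    simp only [Sym2.map_pair_eq]
    exact edgeWeight_eq dist hsymm _ _
  have hcost' : ∀ T : SimpleGraph {A : Set X // A ∈ 𝒞'},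
      treeCost dist 𝒞' T = ∑ᶠ e ∈ T.edgeSet, w' e := by
    intro T
    simp only [hw']
    rfl
  have hcosta : ∀ T : SimpleGraph {A : Set X // A ∈ 𝒞a},
      treeCost dist 𝒞a T = ∑ᶠ e ∈ T.edgeSet, wa e := by
    intro T
    simp only [hwa]
    rfl
  -- distinctness of spacings
  have hspne : ∀ A, A ∈ 𝒞' → ∀ B, B ∈ 𝒞' → ∀ A', A' ∈ 𝒞' → ∀ B', B' ∈ 𝒞' → A ≠ B → A' ≠ B' →
      spacing dist A B = spacing dist A' B' → (A = A' ∧ B = B') ∨ (A = B' ∧ B = A') := by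
    intro A hA B hB A' hA' B' hB' hAB hA'B' heq
    obtain ⟨x, hx, y, hy, h1⟩ := spacing_exists dist (h𝒞'.1 A hA) (h𝒞'.1 B hB)
    obtain ⟨x', hx', y', hy', h2⟩ := spacing_exists dist (h𝒞'.1 A' hA') (h𝒞'.1 B' hB')
    have hxy : x ≠ y := fun h => (hdisj A hA B hB hAB).ne_of_mem hx hy h
    have hxy' : x' ≠ y' := fun h => (hdisj A' hA' B' hB' hA'B').ne_of_mem hx' hy' h
    have hd : dist x y = dist x' y' := by rw [← h1, ← h2, heq]
    rcases hdistinct x y x' y' hxy hxy' hd with ⟨rfl, rfl⟩ | ⟨rfl, rfl⟩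
    · exact Or.inl ⟨hpoint A hA A' hA' x hx hx', hpoint B hB B' hB' y hy hy'⟩
    · exact Or.inr ⟨hpoint A hA B' hB' x hx hy', hpoint B hB A' hA' y hy hx'⟩
  have hminle : ∀ A ∈ 𝒞', ∀ B ∈ 𝒞', A ≠ B → spacing dist Ci Cj ≤ spacing dist A B := by
    intro A hA B hB hAB
    rw [hmin, MinSp]
    apply csInf_le
    · apply Set.Finite.bddBelow
      apply Set.Finite.subset (Set.Finite.image2 (spacing dist) 𝒞'.toFinite 𝒞'.toFinite)
      rintro d ⟨A1, hA1, B1, hB1, _, rfl⟩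
      exact Set.mem_image2_of_mem hA1 hB1
    · exact ⟨A, hA, B, hB, hAB, rfl⟩
  have hminlt : ∀ A ∈ 𝒞', ∀ B ∈ 𝒞', A ≠ B → ¬(A = Ci ∧ B = Cj) → ¬(A = Cj ∧ B = Ci) →
      spacing dist Ci Cj < spacing dist A B := by
    intro A hA B hB hAB h1 h2
    refine lt_of_le_of_ne (hminle A hA B hB hAB) ?_
    intro heq
    rcases hspne Ci hCi Cj hCj A hA B hB hij hAB heq with ⟨e1, e2⟩ | ⟨e1, e2⟩
    · exact h1 ⟨e1.symm, e2.symm⟩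
    · exact h2 ⟨e2.symm, e1.symm⟩
  have htree' := hT'.1
  have hcicj : ci ≠ cj := fun h => hij (congrArg Subtype.val h)
  -- the minimum edge is in the MST
  have hstar : T'.Adj ci cj := by
    by_contra hstar
    clear_value ci cj
    obtain ⟨p, hp⟩ := ((htree'.isConnected ci cj).some.toPath : T'.Path ci cj)
    cases p with
    | nil => exact hcicj rfl
    | @cons _ d _ h q =>
      rw [SimpleGraph.Walk.cons_isPath_iff] at hp
      obtain ⟨hqpath, hcisupp⟩ := hp
      have hfT : s(ci, d) ∈ T'.edgeSet := h
      have hdcj : d ≠ cj := by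
        intro hEq
        exact hstar (hEq ▸ h)
      have hfne : s(ci, d) ≠ s(ci, cj) := by
        intro hEq
        rw [Sym2.eq_iff] at hEq
        rcases hEq with ⟨_, h2⟩ | ⟨h1, _⟩
        · exact hdcj h2
        · exact hcicj h1
      set T'' : SimpleGraph {A : Set X // A ∈ 𝒞'} :=
        T'.deleteEdges {s(ci, d)} ⊔ SimpleGraph.fromEdgeSet {s(ci, cj)} with hT''
      have hT''adj : ∀ x y, T''.Adj x y ↔
          (T'.Adj x y ∧ s(x, y) ≠ s(ci, d)) ∨ (s(x, y) = s(ci, cj) ∧ x ≠ y) := by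
        intro x y
        rw [hT'', SimpleGraph.sup_adj, SimpleGraph.deleteEdges_adj,
          SimpleGraph.fromEdgeSet_adj]
        simp
      have hT''edge : T''.edgeSet = insert s(ci, cj) (T'.edgeSet \ {s(ci, d)}) := by
        rw [hT'', SimpleGraph.edgeSet_sup, SimpleGraph.edgeSet_deleteEdges,
          SimpleGraph.edgeSet_fromEdgeSet]
        have hnd : ¬ (s(ci, cj) : Sym2 {A : Set X // A ∈ 𝒞'}).IsDiag := by
          rw [Sym2.isDiag_iff_proj_eq]
          exact hcicj
        ext e
        simp only [Set.mem_union, Set.mem_diff, Set.mem_singleton_iff, Set.mem_insert_iff,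
          Set.mem_setOf_eq]
        constructor
        · rintro (⟨h1, h2⟩ | ⟨rfl, -⟩)
          · exact Or.inr ⟨h1, h2⟩
          · exact Or.inl rfl
        · rintro (rfl | ⟨h1, h2⟩)
          · exact Or.inr ⟨rfl, hnd⟩
          · exact Or.inl ⟨h1, h2⟩
      have hT''cicj : T''.Adj ci cj := by
        rw [hT''adj]
        exact Or.inr ⟨rfl, hcicj⟩
      have hcjd : T''.Reachable cj d := by
        have hq : T''.Walk d cj := q.transfer T'' (by
          intro e he
          have heT : e ∈ T'.edgeSet := q.edges_subset_edgeSet he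
          have hef : e ≠ s(ci, d) := by
            rintro rfl
            exact hcisupp (SimpleGraph.Walk.fst_mem_support_of_mem_edges q he)
          rw [hT''edge]
          exact Set.mem_insert_of_mem _ ⟨heT, hef⟩)
        exact (SimpleGraph.Walk.reachable hq).symm
      have hreach_cid : T''.Reachable ci d := hT''cicj.reachable.trans hcjd
      have hT''conn : T''.Connected := by
        apply connected_of_forall_adj htree'.isConnected
        intro u v huv
        by_cases hf : s(u, v) = s(ci, d)
        · rw [Sym2.eq_iff] at hf
          rcases hf with ⟨rfl, rfl⟩ | ⟨rfl, rfl⟩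
          · exact hreach_cid
          · exact hreach_cid.symm
        · exact SimpleGraph.Adj.reachable ((hT''adj u v).mpr (Or.inl ⟨huv, hf⟩))
      have hfin'' : T'.edgeSet.Finite := T'.edgeSet.toFinite
      have hstar_nf : s(ci, cj) ∉ T'.edgeSet \ {s(ci, d)} := fun hmem => hstar hmem.1
      have hT''card : T''.edgeSet.ncard = T'.edgeSet.ncard := by
        rw [hT''edge, Set.ncard_insert_of_notMem hstar_nf hfin''.diff,
          Set.ncard_diff_singleton_of_mem hfT]
        have hpos' : 0 < T'.edgeSet.ncard := by
          rw [Set.ncard_pos hfin'']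
          exact ⟨_, hfT⟩
        omega
      have hT''tree : T''.IsTree := by
        apply isTree_of_connected_of_ncard _ hT''conn
        rw [hT''card]
        exact tree_ncard htree'
      have hcostT'' : treeCost dist 𝒞' T'' =
          treeCost dist 𝒞' T' - w' s(ci, d) + w' s(ci, cj) := by
        have e3 : ∑ᶠ e ∈ T'.edgeSet, w' e
            = w' s(ci, d) + ∑ᶠ e ∈ T'.edgeSet \ {s(ci, d)}, w' e :=
          finsum_mem_diff_singleton w' hfT hfin''
        rw [hcost', hcost', hT''edge, finsum_mem_insert'' w' hstar_nf hfin''.diff, e3]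
        ring
      have hlt : w' s(ci, cj) < w' s(ci, d) := by
        rw [hw'sp, hw'sp, hci, hcj]
        apply hminlt Ci hCi d.val d.2
        · intro hEq
          exact h.ne (Subtype.ext (by rw [hci]; exact hEq))
        · rintro ⟨-, h2⟩
          exact hdcj (Subtype.ext (by rw [hcj]; exact h2))
        · rintro ⟨h1, -⟩
          exact hij h1
      have := hT'.2 T'' hT''tree
      rw [hcostT''] at this
      linarith
  have hstar_mem : s(ci, cj) ∈ T'.edgeSet := hstar
  have hfinT' : T'.edgeSet.Finite := T'.edgeSet.toFinite
  -- no common neighbour of ci and cj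
  have hnocommon : ∀ x : {A : Set X // A ∈ 𝒞'}, T'.Adj x ci → T'.Adj x cj → False :=
    fun x h1 h2 => two_paths_absurd htree'.IsAcyclic h1 hstar h2
  -- injectivity of contraction on edges other than the contracted one
  have hsubclaim : ∀ u v a b : {A : Set X // A ∈ 𝒞'}, T'.Adj u v → s(u, v) ≠ s(ci, cj) →
      T'.Adj a b → s(a, b) ≠ s(ci, cj) → φ u = φ a → φ v = φ b → u = a ∧ v = b := by
    intro u v a b huv hnuv hab hnab h1 h2
    rcases hφeq _ _ h1 with rfl | ⟨hu, ha⟩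
    · rcases hφeq _ _ h2 with rfl | ⟨hv, hb⟩
      · exact ⟨rfl, rfl⟩
      · rcases hv with hv | hv <;> rcases hb with hb | hb
        · exact ⟨rfl, hv.trans hb.symm⟩
        · exact (hnocommon u (by rw [← hv]; exact huv) (by rw [← hb]; exact hab)).elim
        · exact (hnocommon u (by rw [← hb]; exact hab) (by rw [← hv]; exact huv)).elim
        · exact ⟨rfl, hv.trans hb.symm⟩
    · rcases hφeq _ _ h2 with rfl | ⟨hv, hb⟩
      · rcases hu with hu | hu <;> rcases ha with ha | ha
        · exact ⟨hu.trans ha.symm, rfl⟩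
        · exact (hnocommon v (by rw [← hu]; exact huv.symm) (by rw [← ha]; exact hab.symm)).elim
        · exact (hnocommon v (by rw [← ha]; exact hab.symm) (by rw [← hu]; exact huv.symm)).elim
        · exact ⟨hu.trans ha.symm, rfl⟩
      · exfalso
        rcases hu with hu | hu <;> rcases hv with hv | hv
        · exact huv.ne (hu.trans hv.symm)
        · exact hnuv (by rw [hu, hv])
        · exact hnuv (by rw [hu, hv]; exact Sym2.eq_swap)
        · exact huv.ne (hu.trans hv.symm)
  have hφinj : Set.InjOn (Sym2.map φ) (T'.edgeSet \ {s(ci, cj)}) := by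
    intro e1 he1 e2 he2 heq
    induction e1 using Sym2.ind with
    | _ u v =>
      induction e2 using Sym2.ind with
      | _ a b =>
        rw [Sym2.map_pair_eq, Sym2.map_pair_eq, Sym2.eq_iff] at heq
        have huv : T'.Adj u v := he1.1
        have hab : T'.Adj a b := he2.1
        have hnuv : s(u, v) ≠ s(ci, cj) := he1.2
        have hnab : s(a, b) ≠ s(ci, cj) := he2.2
        rcases heq with ⟨h1, h2⟩ | ⟨h1, h2⟩
        · obtain ⟨rfl, rfl⟩ := hsubclaim u v a b huv hnuv hab hnab h1 h2
          rfl
        · obtain ⟨rfl, rfl⟩ := hsubclaim u v b a huv hnuv hab.symm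
            (fun hh => hnab (Sym2.eq_swap.trans hh)) h1 h2
          exact Sym2.eq_swap
  -- the edge set of Ta
  have hTaedge : Ta.edgeSet = Sym2.map φ '' (T'.edgeSet \ {s(ci, cj)}) := by
    ext e
    induction e using Sym2.ind with
    | _ x y =>
      simp only [SimpleGraph.mem_edgeSet, Set.mem_image]
      constructor
      · intro hadj
        rw [hTa'] at hadj
        obtain ⟨hne, u', v', hadj', hu, hv⟩ := hadj
        refine ⟨s(u', v'), ⟨hadj', ?_⟩, by rw [Sym2.map_pair_eq, hu, hv]⟩
        intro hEq0
        have hEq : s(u', v') = s(ci, cj) := hEq0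
        rw [Sym2.eq_iff] at hEq
        rcases hEq with ⟨h1, h2⟩ | ⟨h1, h2⟩
        · exact hne (by rw [← hu, ← hv, h1, h2, hφci, hφcj])
        · exact hne (by rw [← hu, ← hv, h1, h2, hφcj, hφci])
      · rintro ⟨e', he', hEq⟩
        revert hEq
        induction e' using Sym2.ind with
        | _ u' v' =>
          intro hEq
          rw [Sym2.map_pair_eq, Sym2.eq_iff] at hEq
          have hadj' : T'.Adj u' v' := he'.1
          have hne' : s(u', v') ≠ s(ci, cj) := he'.2
          have hphine : φ u' ≠ φ v' := by
            intro hp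
            rcases hφeq _ _ hp with rfl | ⟨h1, h2⟩
            · exact hadj'.ne rfl
            · apply hne'
              rcases h1 with h1 | h1 <;> rcases h2 with h2 | h2
              · exact absurd (h1.trans h2.symm) hadj'.ne
              · rw [h1, h2]
              · rw [h1, h2]; exact Sym2.eq_swap
              · exact absurd (h1.trans h2.symm) hadj'.ne
          rw [hTa']
          rcases hEq with ⟨h1, h2⟩ | ⟨h1, h2⟩
          · refine ⟨?_, u', v', hadj', h1, h2⟩
            rw [← h1, ← h2]
            exact hphine
          · refine ⟨?_, v', u', hadj'.symm, h2, h1⟩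
            rw [← h1, ← h2]
            exact hphine.symm
  -- cardinalities
  have hcardV' : Fintype.card {A : Set X // A ∈ 𝒞'} = 𝒞'.ncard := by
    rw [← Nat.card_eq_fintype_card]
    exact Nat.card_coe_set_eq 𝒞'
  have hcardVa : Fintype.card {A : Set X // A ∈ 𝒞a} = 𝒞a.ncard := by
    rw [← Nat.card_eq_fintype_card]
    exact Nat.card_coe_set_eq 𝒞a
  have hpairsub : {Ci, Cj} ⊆ 𝒞' := by
    intro A hA
    rcases hA with rfl | hA
    · exact hCi
    · rw [Set.mem_singleton_iff] at hA
      exact hA ▸ hCj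
  have h𝒞acard : 𝒞a.ncard + 1 = 𝒞'.ncard := by
    have h1 : (𝒞' \ {Ci, Cj}).ncard = 𝒞'.ncard - 2 := by
      rw [Set.ncard_diff hpairsub, Set.ncard_pair hij]
    have h2 : Ci ∪ Cj ∉ 𝒞' \ {Ci, Cj} := fun h => hmnot h.1
    rw [h𝒞a, Set.ncard_insert_of_notMem h2 (𝒞'.toFinite.diff), h1]
    omega
  have hT'card : T'.edgeSet.ncard + 1 = 𝒞'.ncard := by
    rw [← hcardV']
    exact tree_ncard htree'
  have hTacard : Ta.edgeSet.ncard + 1 = T'.edgeSet.ncard := by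
    rw [hTaedge, Set.ncard_image_of_injOn hφinj,
      Set.ncard_diff_singleton_of_mem hstar_mem]
    have hpos' : 0 < T'.edgeSet.ncard := by
      rw [Set.ncard_pos hfinT']
      exact ⟨_, hstar_mem⟩
    omega
  -- connectivity of Ta
  have hreachφ : ∀ u v : {A : Set X // A ∈ 𝒞'}, ∀ _ : T'.Walk u v,
      Ta.Reachable (φ u) (φ v) := by
    intro u v p
    induction p with
    | nil => exact SimpleGraph.Reachable.refl _
    | @cons x y z hadj p ih =>
      refine SimpleGraph.Reachable.trans ?_ ih
      by_cases hxy : φ x = φ y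
      · rw [hxy]
      · exact (SimpleGraph.Adj.reachable ((hTa' _ _).mpr ⟨hxy, x, y, hadj, rfl, rfl⟩))
  have hTaconn : Ta.Connected := by
    rw [SimpleGraph.connected_iff]
    refine ⟨fun a b => ?_, ⟨mv⟩⟩
    obtain ⟨u, rfl⟩ := hφsurj a
    obtain ⟨v, rfl⟩ := hφsurj b
    exact hreachφ u v (htree'.isConnected u v).some
  have hTatree : Ta.IsTree := by
    apply isTree_of_connected_of_ncard _ hTaconn
    rw [hcardVa]
    omega
  -- cost of Ta
  have hwle' : ∀ u v : {A : Set X // A ∈ 𝒞'}, T'.Adj u v → s(u, v) ≠ s(ci, cj) →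
      wa s(φ u, φ v) ≤ w' s(u, v) := by
    intro u v huv hne
    rw [hwasp, hw'sp]
    have hvne : ∀ z : {A : Set X // A ∈ 𝒞'}, z.val.Nonempty := fun z => h𝒞'.1 _ z.2
    by_cases hu : u.val = Ci ∨ u.val = Cj <;> by_cases hv : v.val = Ci ∨ v.val = Cj
    · exfalso
      apply hne
      have hu' : u = ci ∨ u = cj := by
        rcases hu with h | h
        · exact Or.inl (Subtype.ext (by rw [hci]; exact h))
        · exact Or.inr (Subtype.ext (by rw [hcj]; exact h))
      have hv' : v = ci ∨ v = cj := by
        rcases hv with h | h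
        · exact Or.inl (Subtype.ext (by rw [hci]; exact h))
        · exact Or.inr (Subtype.ext (by rw [hcj]; exact h))
      rcases hu' with hu' | hu' <;> rcases hv' with hv' | hv'
      · exact absurd (hu'.trans hv'.symm) huv.ne
      · rw [hu', hv']
      · rw [hu', hv']; exact Sym2.eq_swap
      · exact absurd (hu'.trans hv'.symm) huv.ne
    · have h1 : (φ u).val = Ci ∪ Cj := by rw [hφval, if_pos hu]
      have h2 : (φ v).val = v.val := by rw [hφval, if_neg hv]
      rw [h1, h2]
      rw [spacing_comm dist hsymm (Ci ∪ Cj) v.val,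
        spacing_union_right dist (hvne v) hCine hCjne,
        spacing_comm dist hsymm u.val v.val]
      rcases hu with h | h
      · rw [h]
        exact min_le_left _ _
      · rw [h]
        exact min_le_right _ _
    · have h1 : (φ u).val = u.val := by rw [hφval, if_neg hu]
      have h2 : (φ v).val = Ci ∪ Cj := by rw [hφval, if_pos hv]
      rw [h1, h2]
      rw [spacing_union_right dist (hvne u) hCine hCjne]
      rcases hv with h | h
      · rw [h]
        exact min_le_left _ _
      · rw [h]
        exact min_le_right _ _
    · have h1 : (φ u).val = u.val := by rw [hφval, if_neg hu]
      have h2 : (φ v).val = v.val := by rw [hφval, if_neg hv]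
      rw [h1, h2]
  have hTacost : treeCost dist 𝒞a Ta ≤ treeCost dist 𝒞' T' - w' s(ci, cj) := by
    have e1 : treeCost dist 𝒞a Ta = ∑ᶠ e ∈ T'.edgeSet \ {s(ci, cj)}, wa (Sym2.map φ e) := by
      rw [hcosta, hTaedge]
      exact finsum_mem_image hφinj
    have e2 : ∑ᶠ e ∈ T'.edgeSet, w' e
        = w' s(ci, cj) + ∑ᶠ e ∈ T'.edgeSet \ {s(ci, cj)}, w' e :=
      finsum_mem_diff_singleton w' hstar_mem hfinT'
    have e3 : ∑ᶠ e ∈ T'.edgeSet \ {s(ci, cj)}, wa (Sym2.map φ e)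
        ≤ ∑ᶠ e ∈ T'.edgeSet \ {s(ci, cj)}, w' e := by
      apply finsum_mem_le_finsum_mem' hfinT'.diff
      intro e he
      induction e using Sym2.ind with
      | _ u v =>
        rw [Sym2.map_pair_eq]
        exact hwle' u v he.1 he.2
    rw [e1, hcost', e2]
    linarith
  -- lifting spanning trees of the contracted graph
  have hlift : ∀ S : SimpleGraph {A : Set X // A ∈ 𝒞a}, S.IsTree →
      ∃ S' : SimpleGraph {A : Set X // A ∈ 𝒞'}, S'.IsTree ∧
        treeCost dist 𝒞' S' = treeCost dist 𝒞a S + w' s(ci, cj) := by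
    intro S hStree
    have h𝒞ane : ∀ a : {A : Set X // A ∈ 𝒞a}, a.val.Nonempty := by
      intro a
      rcases (hmem𝒞a a.val).mp a.2 with h | ⟨h1, -, -⟩
      · rw [h]
        exact hCine.inl
      · exact h𝒞'.1 _ h1
    set χ : Set X → {A : Set X // A ∈ 𝒞'} := fun B =>
      if spacing dist B Ci ≤ spacing dist B Cj then ci else cj with hχ
    have hχval : ∀ B : Set X, B.Nonempty →
        spacing dist B (Ci ∪ Cj) = spacing dist B (χ B).val := by
      intro B hB
      rw [spacing_union_right dist hB hCine hCjne, hχ]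
      dsimp only
      split_ifs with h
      · exact min_eq_left h
      · exact min_eq_right (le_of_not_ge h)
    have hχor : ∀ B : Set X, (χ B).val = Ci ∨ (χ B).val = Cj := by
      intro B
      rw [hχ]
      dsimp only
      split_ifs
      · exact Or.inl rfl
      · exact Or.inr rfl
    set L : {A : Set X // A ∈ 𝒞a} → {A : Set X // A ∈ 𝒞a} → {A : Set X // A ∈ 𝒞'} :=
      fun a b => if h : a.val = Ci ∪ Cj then χ b.val
        else ⟨a.val, (((hmem𝒞a a.val).mp a.2).resolve_left h).1⟩ with hL
    have hLpos : ∀ a b, a.val = Ci ∪ Cj → L a b = χ b.val := by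
      intro a b h
      rw [hL]
      dsimp only
      rw [dif_pos h]
    have hLneg : ∀ a b, a.val ≠ Ci ∪ Cj → (L a b).val = a.val := by
      intro a b h
      rw [hL]
      dsimp only
      rw [dif_neg h]
    have hφL : ∀ a b, φ (L a b) = a := by
      intro a b
      apply Subtype.ext
      by_cases h : a.val = Ci ∪ Cj
      · rw [hLpos a b h, hφval, if_pos (hχor b.val), h]
      · obtain ⟨-, h2, h3⟩ := ((hmem𝒞a a.val).mp a.2).resolve_left h
        rw [hφval, hLneg a b h, if_neg (by rw [not_or]; exact ⟨h2, h3⟩)]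
    have hLne : ∀ a b, S.Adj a b → L a b ≠ L b a := by
      intro a b hab hEq
      exact hab.ne (by rw [← hφL a b, hEq, hφL b a])
    set Lmap : Sym2 {A : Set X // A ∈ 𝒞a} → Sym2 {A : Set X // A ∈ 𝒞'} :=
      Sym2.lift ⟨fun a b => s(L a b, L b a), fun a b => Sym2.eq_swap⟩ with hLmap
    have hLmapmk : ∀ a b, Lmap s(a, b) = s(L a b, L b a) := fun a b => rfl
    have hmap_inv : ∀ e : Sym2 {A : Set X // A ∈ 𝒞a}, Sym2.map φ (Lmap e) = e := by
      intro e
      induction e using Sym2.ind with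
      | _ a b => rw [hLmapmk, Sym2.map_pair_eq, hφL, hφL]
    have hLinj : Set.InjOn Lmap S.edgeSet := by
      intro e1 _ e2 _ h
      rw [← hmap_inv e1, ← hmap_inv e2, h]
    have hLdiag : ∀ e ∈ S.edgeSet, ¬ (Lmap e).IsDiag := by
      intro e he
      induction e using Sym2.ind with
      | _ a b =>
        rw [hLmapmk, Sym2.isDiag_iff_proj_eq]
        exact hLne a b he
    have hstar_nm : s(ci, cj) ∉ Lmap '' S.edgeSet := by
      rintro ⟨e, he, hEq⟩
      have h1 := hmap_inv e
      rw [hEq, Sym2.map_pair_eq, hφci, hφcj] at h1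
      have h2 : e.IsDiag := by
        rw [← h1, Sym2.isDiag_iff_proj_eq]
      exact (S.not_isDiag_of_mem_edgeSet he) h2
    set S' : SimpleGraph {A : Set X // A ∈ 𝒞'} :=
      SimpleGraph.fromEdgeSet (insert s(ci, cj) (Lmap '' S.edgeSet)) with hS'def
    have hS'edge : S'.edgeSet = insert s(ci, cj) (Lmap '' S.edgeSet) := by
      rw [hS'def, SimpleGraph.edgeSet_fromEdgeSet]
      rw [sdiff_eq_self_iff_disjoint, Set.disjoint_left]
      intro e hdiag hmem
      rcases hmem with rfl | hmem
      · rw [Sym2.mem_diagSet, Sym2.isDiag_iff_proj_eq] at hdiag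
        exact hcicj hdiag
      · obtain ⟨e0, he0, rfl⟩ := hmem
        exact hLdiag e0 he0 hdiag
    have hS'adjstar : S'.Adj ci cj := by
      rw [hS'def, SimpleGraph.fromEdgeSet_adj]
      exact ⟨Set.mem_insert _ _, hcicj⟩
    have hS'adjL : ∀ a b, S.Adj a b → S'.Adj (L a b) (L b a) := by
      intro a b hab
      rw [hS'def, SimpleGraph.fromEdgeSet_adj]
      exact ⟨Set.mem_insert_of_mem _ ⟨s(a, b), hab, (hLmapmk a b)⟩, hLne a b hab⟩
    have hfiber : ∀ u v : {A : Set X // A ∈ 𝒞'}, φ u = φ v → S'.Reachable u v := by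
      intro u v h
      rcases hφeq _ _ h with rfl | ⟨h1, h2⟩
      · exact SimpleGraph.Reachable.refl _
      · rcases h1 with rfl | rfl <;> rcases h2 with rfl | rfl
        · exact SimpleGraph.Reachable.refl _
        · exact hS'adjstar.reachable
        · exact hS'adjstar.symm.reachable
        · exact SimpleGraph.Reachable.refl _
    have hwalkS : ∀ a b : {A : Set X // A ∈ 𝒞a}, ∀ _ : S.Walk a b, ∀ u v : {A : Set X // A ∈ 𝒞'},
        φ u = a → φ v = b → S'.Reachable u v := by
      intro a b p
      induction p with
      | nil => exact fun u v hu hv => hfiber u v (hu.trans hv.symm)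
      | @cons x y z hadj p ih =>
        intro u v hu hv
        refine (hfiber u (L x y) (hu.trans (hφL x y).symm)).trans ?_
        exact (hS'adjL x y hadj).reachable.trans (ih (L y x) v (hφL y x) hv)
    have hS'conn : S'.Connected := by
      rw [SimpleGraph.connected_iff]
      refine ⟨fun u v => ?_, ⟨ci⟩⟩
      exact hwalkS (φ u) (φ v) (hStree.isConnected (φ u) (φ v)).some u v rfl rfl
    have hScard := tree_ncard hStree
    rw [hcardVa] at hScard
    have hS'card : S'.edgeSet.ncard = S.edgeSet.ncard + 1 := by
      rw [hS'edge, Set.ncard_insert_of_notMem hstar_nm (S.edgeSet.toFinite.image _),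
        Set.ncard_image_of_injOn hLinj]
    have hS'tree : S'.IsTree := by
      apply isTree_of_connected_of_ncard _ hS'conn
      rw [hS'card, hcardV']
      omega
    have hwEq : ∀ a b : {A : Set X // A ∈ 𝒞a}, S.Adj a b →
        w' s(L a b, L b a) = wa s(a, b) := by
      intro a b hab
      rw [hw'sp, hwasp]
      have hnm : ¬ (a.val = Ci ∪ Cj ∧ b.val = Ci ∪ Cj) := by
        rintro ⟨h1, h2⟩
        exact hab.ne (Subtype.ext (h1.trans h2.symm))
      by_cases ha : a.val = Ci ∪ Cj
      · have hb : b.val ≠ Ci ∪ Cj := fun h => hnm ⟨ha, h⟩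
        rw [hLpos a b ha, hLneg b a hb]
        rw [spacing_comm dist hsymm (χ b.val).val b.val, ← hχval b.val (h𝒞ane b),
          spacing_comm dist hsymm b.val (Ci ∪ Cj), ha]
      · by_cases hb : b.val = Ci ∪ Cj
        · rw [hLneg a b ha, hLpos b a hb]
          rw [← hχval a.val (h𝒞ane a), hb]
        · rw [hLneg a b ha, hLneg b a hb]
    have hwEq' : ∀ e ∈ S.edgeSet, w' (Lmap e) = wa e := by
      intro e he
      induction e using Sym2.ind with
      | _ a b =>
        rw [hLmapmk]
        exact hwEq a b he
    refine ⟨S', hS'tree, ?_⟩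
    rw [hcost', hcosta, hS'edge,
      finsum_mem_insert'' w' hstar_nm (S.edgeSet.toFinite.image _),
      finsum_mem_image hLinj, finsum_mem_congr rfl hwEq']
    ring
  refine ⟨hTatree, ?_⟩
  intro S hS
  obtain ⟨S', hS'tree, hS'cost⟩ := hlift S hS
  have h1 := hT'.2 S' hS'tree
  rw [hS'cost] at h1
  linarith


end ClusterSpacing
end

section
/- Let A be a clustering of X into ℓ ≥ 2 groups and let B be a clustering of X into k ≥ ℓ groups that refines A, i.e., every group of B is contained in some group of A. Then MST-Sp(B) ≥ MST-Sp(A). -/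
open scoped Classical

namespace ClusterSpacing

variable {X : Type*}

lemma reachable_map_aux {V W : Type*} {G : SimpleGraph V} {H : SimpleGraph W} (f : V → W)
    (h : ∀ a b : V, G.Adj a b → H.Reachable (f a) (f b)) {a b : V}
    (hr : G.Reachable a b) : H.Reachable (f a) (f b) := by
  obtain ⟨p⟩ := hr
  induction p with
  | nil => exact SimpleGraph.Reachable.refl _
  | cons ha _ ih => exact (h _ _ ha).trans ih

lemma exists_spanning_tree_aux {V : Type*} [Finite V] :
    ∀ (n : ℕ) (G : SimpleGraph V), G.edgeSet.ncard = n → G.Connected → ∃ T ≤ G, T.IsTree := by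
  intro n
  induction n using Nat.strong_induction_on with
  | _ n ih =>
    intro G hn hG
    by_cases hac : G.IsAcyclic
    · exact ⟨G, le_rfl, ⟨hG, hac⟩⟩
    · rw [SimpleGraph.isAcyclic_iff_forall_edge_isBridge] at hac
      push_neg at hac
      obtain ⟨e, he, hbe⟩ := hac
      induction e using Sym2.ind with
      | _ v w =>
      have hadj : G.Adj v w := (SimpleGraph.mem_edgeSet G).1 he
      rw [SimpleGraph.isBridge_iff] at hbe
      push_neg at hbe
      have hreach : (G \ SimpleGraph.fromEdgeSet {s(v, w)}).Reachable v w := hbe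
      set G' := G \ SimpleGraph.fromEdgeSet {s(v, w)} with hG'
      have hle : G' ≤ G := sdiff_le
      have hstep : ∀ a b : V, G.Adj a b → G'.Reachable a b := by
        intro a b hab
        by_cases hce : s(a, b) = s(v, w)
        · rw [Sym2.eq_iff] at hce
          rcases hce with ⟨rfl, rfl⟩ | ⟨rfl, rfl⟩
          · exact hreach
          · exact hreach.symm
        · refine SimpleGraph.Adj.reachable ?_
          rw [hG', SimpleGraph.sdiff_adj, SimpleGraph.fromEdgeSet_adj]
          exact ⟨hab, fun hc => hce hc.1⟩
      have hconn : G'.Connected := by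
        haveI : Nonempty V := hG.nonempty
        refine SimpleGraph.Connected.mk fun a b => ?_
        exact reachable_map_aux (id : V → V) hstep (hG.preconnected a b)
      have hss : G'.edgeSet ⊂ G.edgeSet := by
        refine ⟨SimpleGraph.edgeSet_mono hle, fun hsub => ?_⟩
        have h1 : s(v, w) ∈ G'.edgeSet := hsub he
        rw [SimpleGraph.mem_edgeSet, hG', SimpleGraph.sdiff_adj,
          SimpleGraph.fromEdgeSet_adj] at h1
        exact h1.2 ⟨rfl, hadj.ne⟩
      have hlt : G'.edgeSet.ncard < n := by
        have := Set.ncard_lt_ncard hss (Set.toFinite _)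
        omega
      obtain ⟨T, h1, h2⟩ := ih _ hlt G' rfl hconn
      exact ⟨T, h1.trans hle, h2⟩

theorem MSTSp_le_of_refines {X : Type*} [Fintype X] (dist : X → X → ℝ)
    (hsymm : ∀ x y : X, dist x y = dist y x)
    (hpos : ∀ x y : X, x ≠ y → 0 < dist x y)
    (hdistinct : ∀ x y x' y' : X, x ≠ y → x' ≠ y' → dist x y = dist x' y' →
      (x = x' ∧ y = y') ∨ (x = y' ∧ y = x'))
    (ℓ k : ℕ) (hℓ : 2 ≤ ℓ) (hℓk : ℓ ≤ k)
    (𝒜 : Set (Set X)) (h𝒜 : IsClustering 𝒜) (h𝒜c : 𝒜.ncard = ℓ)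
    (ℬ : Set (Set X)) (hℬ : IsClustering ℬ) (hℬc : ℬ.ncard = k)
    (href : ∀ B ∈ ℬ, ∃ A ∈ 𝒜, B ⊆ A) :
    MSTSp dist 𝒜 ≤ MSTSp dist ℬ := by
  classical
  obtain ⟨hAne, hAcov, hAdisj⟩ := h𝒜
  obtain ⟨hBne, hBcov, hBdisj⟩ := hℬ
  have hAnonempty : 𝒜.Nonempty := Set.nonempty_of_ncard_ne_zero (by omega)
  have hBnonempty : ℬ.Nonempty := Set.nonempty_of_ncard_ne_zero (by omega)
  haveI : Nonempty {A : Set X // A ∈ 𝒜} := hAnonempty.to_subtype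
  haveI : Nonempty {B : Set X // B ∈ ℬ} := hBnonempty.to_subtype
  -- the map from groups of ℬ to groups of 𝒜
  have hφex : ∀ b : {B : Set X // B ∈ ℬ}, ∃ a : {A : Set X // A ∈ 𝒜},
      (b : Set X) ⊆ (a : Set X) := by
    intro b
    obtain ⟨A, hA, hBA⟩ := href b.1 b.2
    exact ⟨⟨A, hA⟩, hBA⟩
  choose φ hφ using hφex
  have hφsurj : Function.Surjective φ := by
    intro a
    obtain ⟨x, hx⟩ := hAne a.1 a.2
    have hxB : x ∈ ⋃₀ ℬ := by rw [hBcov]; trivial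
    obtain ⟨B, hB, hxB⟩ := hxB
    refine ⟨⟨B, hB⟩, ?_⟩
    by_contra hne
    have hdis := hAdisj _ (φ ⟨B, hB⟩).2 _ a.2 (fun h => hne (Subtype.ext h))
    exact Set.disjoint_left.1 hdis (hφ ⟨B, hB⟩ hxB) hx
  -- nonnegativity of edge weights on a clustering
  have wnonneg : ∀ (𝒞 : Set (Set X)), (∀ A ∈ 𝒞, ∀ B ∈ 𝒞, A ≠ B → Disjoint A B) →
      ∀ (T : SimpleGraph {A : Set X // A ∈ 𝒞}), ∀ e ∈ T.edgeSet,
      0 ≤ edgeWeight dist (Sym2.map Subtype.val e) := by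
    intro 𝒞 hdisj T e he
    induction e using Sym2.ind with
    | _ a b =>
      have hab : a ≠ b := ((SimpleGraph.mem_edgeSet T).1 he).ne
      rw [Sym2.map_pair_eq]
      simp only [edgeWeight, Sym2.lift_mk]
      apply Real.sInf_nonneg
      rintro d (⟨x, hx, y, hy, rfl⟩ | ⟨x, hx, y, hy, rfl⟩)
      · exact (hpos x y ((hdisj _ a.2 _ b.2
          (fun h => hab (Subtype.ext h))).ne_of_mem hx hy)).le
      · exact (hpos x y ((hdisj _ b.2 _ a.2
          (fun h => hab.symm (Subtype.ext h))).ne_of_mem hx hy)).le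
  -- weight comparison under refinement
  have wle : ∀ (a1 a2 : {A : Set X // A ∈ 𝒜}) (b1 b2 : {B : Set X // B ∈ ℬ}),
      a1 ≠ a2 → b1 ≠ b2 → (b1 : Set X) ⊆ (a1 : Set X) → (b2 : Set X) ⊆ (a2 : Set X) →
      edgeWeight dist s(a1.1, a2.1) ≤ edgeWeight dist s(b1.1, b2.1) := by
    intro a1 a2 b1 b2 ha hb hs1 hs2
    simp only [edgeWeight, Sym2.lift_mk]
    apply csInf_le_csInf
    · refine ⟨0, ?_⟩
      rintro d (⟨x, hx, y, hy, rfl⟩ | ⟨x, hx, y, hy, rfl⟩)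
      · exact (hpos x y ((hAdisj _ a1.2 _ a2.2
          (fun h => ha (Subtype.ext h))).ne_of_mem hx hy)).le
      · exact (hpos x y ((hAdisj _ a2.2 _ a1.2
          (fun h => ha.symm (Subtype.ext h))).ne_of_mem hx hy)).le
    · obtain ⟨x, hx⟩ := hBne b1.1 b1.2
      obtain ⟨y, hy⟩ := hBne b2.1 b2.2
      exact ⟨dist x y, Or.inl ⟨x, hx, y, hy, rfl⟩⟩
    · rintro d (⟨x, hx, y, hy, rfl⟩ | ⟨x, hx, y, hy, rfl⟩)
      · exact Or.inl ⟨x, hs1 hx, y, hs2 hy, rfl⟩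
      · exact Or.inr ⟨x, hs2 hx, y, hs1 hy, rfl⟩
  -- bounded below: all tree costs are nonnegative
  have costnonneg : ∀ (𝒞 : Set (Set X)), (∀ A ∈ 𝒞, ∀ B ∈ 𝒞, A ≠ B → Disjoint A B) →
      ∀ (T : SimpleGraph {A : Set X // A ∈ 𝒞}), 0 ≤ treeCost dist 𝒞 T := by
    intro 𝒞 hdisj T
    rw [treeCost, finsum_mem_eq_finite_toFinset_sum _ (Set.toFinite T.edgeSet)]
    apply Finset.sum_nonneg
    intro e he
    exact wnonneg 𝒞 hdisj T e ((Set.Finite.mem_toFinset _).1 he)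
  refine le_csInf ?_ ?_
  · -- some spanning tree on ℬ exists
    have htop : (⊤ : SimpleGraph {B : Set X // B ∈ ℬ}).Connected := by
      refine SimpleGraph.Connected.mk fun a b => ?_
      by_cases h : a = b
      · exact h ▸ SimpleGraph.Reachable.refl a
      · exact SimpleGraph.Adj.reachable (by simpa using h)
    obtain ⟨T, _, hT⟩ := exists_spanning_tree_aux _ ⊤ rfl htop
    exact ⟨treeCost dist ℬ T, T, hT, rfl⟩
  · rintro c ⟨TB, hTB, rfl⟩
    -- contracted graph on 𝒜
    let GA : SimpleGraph {A : Set X // A ∈ 𝒜} :=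
      { Adj := fun a1 a2 => a1 ≠ a2 ∧ ∃ b1 b2, TB.Adj b1 b2 ∧ φ b1 = a1 ∧ φ b2 = a2
        symm := ⟨by
          rintro a1 a2 ⟨hne, b1, b2, hadj, h1, h2⟩
          exact ⟨hne.symm, b2, b1, hadj.symm, h2, h1⟩⟩
        loopless := ⟨fun a h => h.1 rfl⟩ }
    have hGAconn : GA.Connected := by
      refine SimpleGraph.Connected.mk fun a1 a2 => ?_
      obtain ⟨b1, rfl⟩ := hφsurj a1
      obtain ⟨b2, rfl⟩ := hφsurj a2
      refine reachable_map_aux φ ?_ (hTB.isConnected.preconnected b1 b2)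
      intro x y hxy
      by_cases h : φ x = φ y
      · exact h ▸ SimpleGraph.Reachable.refl _
      · exact SimpleGraph.Adj.reachable ⟨h, x, y, hxy, rfl, rfl⟩
    obtain ⟨TA, hTAle, hTAtree⟩ := exists_spanning_tree_aux _ GA rfl hGAconn
    -- choose preimage edges
    have hP : ∀ e ∈ TA.edgeSet, ∃ e' ∈ TB.edgeSet, Sym2.map φ e' = e := by
      intro e he
      induction e using Sym2.ind with
      | _ a1 a2 =>
        have hGA : GA.Adj a1 a2 :=
          (SimpleGraph.mem_edgeSet GA).1 (SimpleGraph.edgeSet_mono hTAle he)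
        obtain ⟨hne, b1, b2, hadj, h1, h2⟩ := hGA
        exact ⟨s(b1, b2), (SimpleGraph.mem_edgeSet TB).2 hadj,
          by rw [Sym2.map_pair_eq, h1, h2]⟩
    haveI : Nonempty (Sym2 {B : Set X // B ∈ ℬ}) :=
      ⟨s(Classical.arbitrary _, Classical.arbitrary _)⟩
    choose! ψ hψmem hψmap using hP
    -- cost comparison
    have hcost : treeCost dist 𝒜 TA ≤ treeCost dist ℬ TB := by
      rw [treeCost, treeCost,
        finsum_mem_eq_finite_toFinset_sum _ (Set.toFinite TA.edgeSet),
        finsum_mem_eq_finite_toFinset_sum _ (Set.toFinite TB.edgeSet)]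
      have hmemA : ∀ e ∈ (Set.toFinite TA.edgeSet).toFinset, e ∈ TA.edgeSet := by
        intro e he; exact (Set.Finite.mem_toFinset _).1 he
      calc ∑ e ∈ (Set.toFinite TA.edgeSet).toFinset,
              edgeWeight dist (Sym2.map Subtype.val e)
          ≤ ∑ e ∈ (Set.toFinite TA.edgeSet).toFinset,
              edgeWeight dist (Sym2.map Subtype.val (ψ e)) := by
            apply Finset.sum_le_sum
            intro e he
            have heA := hmemA e he
            have hm := hψmem e heA
            have hmap := hψmap e heA
            obtain ⟨b1, b2, hb⟩ : ∃ b1 b2, ψ e = s(b1, b2) :=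
              Sym2.ind (fun x y => ⟨x, y, rfl⟩) (ψ e)
            rw [hb] at hm hmap
            have hbadj : TB.Adj b1 b2 := (SimpleGraph.mem_edgeSet TB).1 hm
            have heq : e = s(φ b1, φ b2) := by rw [← hmap, Sym2.map_pair_eq]
            have hane : φ b1 ≠ φ b2 := by
              intro h
              have : TA.Adj (φ b1) (φ b2) := by
                rw [← SimpleGraph.mem_edgeSet, ← heq]; exact heA
              exact this.ne h
            rw [hb, heq, Sym2.map_pair_eq, Sym2.map_pair_eq]
            exact wle (φ b1) (φ b2) b1 b2 hane hbadj.ne (hφ b1) (hφ b2)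
        _ = ∑ e' ∈ (Set.toFinite TA.edgeSet).toFinset.image ψ,
              edgeWeight dist (Sym2.map Subtype.val e') := by
            have hinj : ∀ x ∈ (Set.toFinite TA.edgeSet).toFinset,
                ∀ y ∈ (Set.toFinite TA.edgeSet).toFinset, ψ x = ψ y → x = y := by
              intro x hx y hy hxy
              rw [← hψmap x (hmemA x hx), ← hψmap y (hmemA y hy), hxy]
            exact (Finset.sum_image (f := fun e' => edgeWeight dist (Sym2.map Subtype.val e')) hinj).symm
        _ ≤ ∑ e' ∈ (Set.toFinite TB.edgeSet).toFinset,
              edgeWeight dist (Sym2.map Subtype.val e') := by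
            apply Finset.sum_le_sum_of_subset_of_nonneg
            · intro e' he'
              obtain ⟨e, he, rfl⟩ := Finset.mem_image.1 he'
              exact (Set.Finite.mem_toFinset _).2 (hψmem e (hmemA e he))
            · intro e' he' _
              exact wnonneg ℬ hBdisj TB e' ((Set.Finite.mem_toFinset _).1 he')
    refine le_trans (csInf_le ?_ ⟨TA, hTAtree, rfl⟩) hcost
    refine ⟨0, ?_⟩
    rintro c ⟨T, hT, rfl⟩
    exact costnonneg 𝒜 hAdisj T

end ClusterSpacing
end

section
/- Let m ≥ 2 and T be positive integers and let s_1, …, s_{3m} be positive integers with Σ_{i=1}^{3m} s_i = mT and T/4 < s_i < T/2 for every i. Let α > 1/2 be a real number, let X be the disjoint union of sets X_1, …, X_{3m} with |X_i| = s_i, and define dist(x, y) = 1/2 if x and y lie in the same X_i and dist(x, y) = α otherwise. Then there exists an (m, T)-clustering C of X with MST-Sp(C) = (m−1)α if and only if the index set {1, …, 3m} can be partitioned into m triples such that, for each triple {i_1, i_2, i_3}, s_{i_1} + s_{i_2} + s_{i_3} = T. -/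
open scoped Classical

namespace ClusterSpacing

variable {X : Type*}

section Aux
variable {dist : X → X → ℝ}
-- star graph (already tested) ----------------------------------------------
def starG {V : Type*} (c : V) : SimpleGraph V where
  Adj a b := a ≠ b ∧ (a = c ∨ b = c)
  symm := ⟨by intro a b ⟨h1, h2⟩; exact ⟨h1.symm, h2.symm⟩⟩
  loopless := ⟨fun a h => h.1 rfl⟩

lemma starG_isTree {V : Type*} (c : V) : (starG c).IsTree := by
  constructor
  · have hreach : ∀ v : V, (starG c).Reachable v c := by
      intro v
      by_cases hv : v = c
      · exact hv ▸ SimpleGraph.Reachable.refl v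
      · exact SimpleGraph.Adj.reachable ⟨hv, Or.inr rfl⟩
    have : Nonempty V := ⟨c⟩
    exact ⟨fun u v => (hreach u).trans (hreach v).symm⟩
  · intro v p hp
    match p with
    | .nil => exact SimpleGraph.Walk.IsCycle.not_of_nil hp
    | .cons h₁ .nil => exact h₁.1 rfl
    | .cons h₁ (.cons h₂ .nil) =>
      have := hp.edges_nodup
      simp [Sym2.eq_swap] at this
    | .cons (u := v) (v := a1) h₁ (.cons (v := a2) h₂ (.cons (v := a3) h₃ q)) =>
      have hnd := hp.support_nodup
      simp only [SimpleGraph.Walk.support_cons, List.tail_cons, List.nodup_cons] at hnd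
      obtain ⟨ha1, ha2, -⟩ := hnd
      have hv : v ∈ q.support := q.end_mem_support
      have ha3 : a3 ∈ q.support := q.start_mem_support
      rcases h₂.2 with rfl | rfl
      · rcases h₃.2 with h | h
        · exact h₂.1 h.symm
        · exact ha1 (List.mem_cons_of_mem _ (h ▸ ha3))
      · rcases h₁.2 with h | h
        · exact ha2 (h ▸ hv)
        · exact h₂.1 h

lemma starG_edgeFinset {V : Type*} [Fintype V] [DecidableEq V] (c : V)
    [Fintype (starG c).edgeSet] :
    (starG c).edgeFinset = (Finset.univ.erase c).image (fun v => s(c, v)) := by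
  ext e
  induction e using Sym2.ind with
  | _ a b =>
    simp only [SimpleGraph.mem_edgeFinset, SimpleGraph.mem_edgeSet, Finset.mem_image,
      Finset.mem_erase, Finset.mem_univ, and_true]
    constructor
    · rintro ⟨hne, rfl | rfl⟩
      · exact ⟨b, fun h => hne h.symm, rfl⟩
      · exact ⟨a, hne, Sym2.eq_swap⟩
    · rintro ⟨x, hx, he⟩
      rw [Sym2.eq_iff] at he
      rcases he with ⟨h1, h2⟩ | ⟨h1, h2⟩
      · subst h1; subst h2
        exact ⟨fun h => hx h.symm, Or.inl rfl⟩
      · subst h1; subst h2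
        exact ⟨hx, Or.inr rfl⟩

-- edgeWeight lemmas ----------------------------------------------------------


lemma edgeWeight_mk (dist : X → X → ℝ) (A B : Set X) : edgeWeight dist s(A, B) =
    sInf ({d : ℝ | ∃ x ∈ A, ∃ y ∈ B, d = dist x y} ∪
          {d : ℝ | ∃ x ∈ B, ∃ y ∈ A, d = dist x y}) := rfl

lemma edgeWeight_nonneg (h0 : ∀ x y, 0 ≤ dist x y) (e : Sym2 (Set X)) :
    0 ≤ edgeWeight dist e := by
  induction e using Sym2.ind with
  | _ A B =>
    rw [edgeWeight_mk]
    apply Real.sInf_nonneg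
    rintro d (⟨x, hx, y, hy, rfl⟩ | ⟨x, hx, y, hy, rfl⟩) <;> exact h0 _ _

lemma edgeWeight_le (h0 : ∀ x y, 0 ≤ dist x y) {A B : Set X} {x y : X}
    (hx : x ∈ A) (hy : y ∈ B) : edgeWeight dist s(A, B) ≤ dist x y := by
  rw [edgeWeight_mk]
  refine csInf_le ⟨0, ?_⟩ (Or.inl ⟨x, hx, y, hy, rfl⟩)
  rintro d (⟨x', hx', y', hy', rfl⟩ | ⟨x', hx', y', hy', rfl⟩) <;> exact h0 _ _

lemma edgeWeight_const {A B : Set X} {a : ℝ} (hA : A.Nonempty) (hB : B.Nonempty)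
    (h : ∀ x ∈ A, ∀ y ∈ B, dist x y = a) (h' : ∀ x ∈ B, ∀ y ∈ A, dist x y = a) :
    edgeWeight dist s(A, B) = a := by
  rw [edgeWeight_mk]
  have hset : ({d : ℝ | ∃ x ∈ A, ∃ y ∈ B, d = dist x y} ∪
      {d : ℝ | ∃ x ∈ B, ∃ y ∈ A, d = dist x y}) = {a} := by
    ext d
    simp only [Set.mem_union, Set.mem_setOf_eq, Set.mem_singleton_iff]
    constructor
    · rintro (⟨x, hx, y, hy, rfl⟩ | ⟨x, hx, y, hy, rfl⟩)
      · exact h x hx y hy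
      · exact h' x hx y hy
    · rintro rfl
      obtain ⟨x, hx⟩ := hA
      obtain ⟨y, hy⟩ := hB
      exact Or.inl ⟨x, hx, y, hy, (h x hx y hy).symm⟩
  rw [hset, csInf_singleton]

-- treeCost lemmas ------------------------------------------------------------
variable [Fintype X] {𝒞 : Set (Set X)}

lemma treeCost_eq_sum (dist : X → X → ℝ) (𝒞 : Set (Set X))
    (T : SimpleGraph {A : Set X // A ∈ 𝒞}) [Fintype T.edgeSet] :
    treeCost dist 𝒞 T = ∑ e ∈ T.edgeFinset, edgeWeight dist (Sym2.map Subtype.val e) := by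
  rw [treeCost, ← SimpleGraph.coe_edgeFinset, finsum_mem_coe_finset]

lemma treeCost_nonneg (h0 : ∀ x y, 0 ≤ dist x y)
    (T : SimpleGraph {A : Set X // A ∈ 𝒞}) : 0 ≤ treeCost dist 𝒞 T := by
  haveI : Fintype T.edgeSet := (Set.toFinite _).fintype
  rw [treeCost_eq_sum]
  exact Finset.sum_nonneg fun e _ => edgeWeight_nonneg h0 _

lemma treeCost_const {mm : ℕ} {α : ℝ} [Fintype {A : Set X // A ∈ 𝒞}]
    (T : SimpleGraph {A : Set X // A ∈ 𝒞}) (htree : T.IsTree)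
    (hcard : Fintype.card {A : Set X // A ∈ 𝒞} = mm)
    (hw : ∀ e ∈ T.edgeSet, edgeWeight dist (Sym2.map Subtype.val e) = α) :
    treeCost dist 𝒞 T = (mm - 1 : ℝ) * α := by
  haveI : Fintype T.edgeSet := (Set.toFinite _).fintype
  rw [treeCost_eq_sum]
  rw [Finset.sum_congr rfl fun e he => hw e (SimpleGraph.mem_edgeFinset.mp he)]
  rw [Finset.sum_const, nsmul_eq_mul]
  have hc := htree.card_edgeFinset
  rw [hcard] at hc
  have : (T.edgeFinset.card : ℝ) = (mm : ℝ) - 1 := by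
    have : ((T.edgeFinset.card : ℕ) : ℝ) + 1 = (mm : ℝ) := by exact_mod_cast hc
    linarith
  rw [this]

lemma treeCost_star (dist : X → X → ℝ) (𝒞 : Set (Set X)) [Fintype {A : Set X // A ∈ 𝒞}]
    (c : {A : Set X // A ∈ 𝒞}) :
    treeCost dist 𝒞 (starG c) =
      ∑ v ∈ Finset.univ.erase c, edgeWeight dist (Sym2.map Subtype.val s(c, v)) := by
  haveI : Fintype (starG c).edgeSet := (Set.toFinite _).fintype
  rw [treeCost_eq_sum, starG_edgeFinset c, Finset.sum_image]
  intro x hx y hy hxy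
  rw [Sym2.eq_iff] at hxy
  rcases hxy with ⟨-, h⟩ | ⟨h1, h2⟩
  · exact h
  · exact absurd h2 (Finset.mem_erase.mp hx).1

-- counting lemma -------------------------------------------------------------
lemma card_sigma_subtype {n : ℕ} (s : Fin n → ℕ) (p : Fin n → Prop) [DecidablePred p] :
    Nat.card {x : Σ i : Fin n, Fin (s i) // p x.1} = ∑ i ∈ Finset.univ.filter p, s i := by
  rw [Nat.card_congr (Equiv.subtypeSigmaEquiv (fun i => Fin (s i)) p)]
  rw [Nat.card_eq_fintype_card, Fintype.card_sigma]
  simp only [Fintype.card_fin]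
  exact (Finset.sum_subtype _ (by simp) s).symm

-- pigeonhole -----------------------------------------------------------------
lemma all_eq_of_sum {β : Type*} [Fintype β] (t : β → ℕ) (T : ℕ) (h : ∀ v, T ≤ t v)
    (hsum : ∑ v, t v = Fintype.card β * T) : ∀ v, t v = T := by
  by_contra h'
  push_neg at h'
  obtain ⟨v0, hv0⟩ := h'
  have hlt : ∑ _v : β, T < ∑ v, t v :=
    Finset.sum_lt_sum (fun i _ => h i)
      ⟨v0, Finset.mem_univ _, lt_of_le_of_ne (h v0) (Ne.symm hv0)⟩
  rw [Finset.sum_const, Finset.card_univ, smul_eq_mul, hsum] at hlt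
  exact lt_irrefl _ hlt

-- fiber card three -----------------------------------------------------------
lemma fiber_card_three {T : ℕ} (hT : 0 < T) {n : ℕ} (s : Fin n → ℕ) (F : Finset (Fin n))
    (hlo : ∀ i, (T : ℝ) / 4 < (s i : ℝ)) (hhi : ∀ i, (s i : ℝ) < (T : ℝ) / 2)
    (hsum : ∑ i ∈ F, s i = T) : F.card = 3 := by
  have hne : F.Nonempty := by
    rcases Finset.eq_empty_or_nonempty F with rfl | h
    · simp at hsum; omega
    · exact h
  have hT' : (0 : ℝ) < T := by exact_mod_cast hT
  have hcsum : ∑ i ∈ F, ((s i : ℝ)) = (T : ℝ) := by exact_mod_cast congrArg (Nat.cast : ℕ → ℝ) hsum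
  have h1 : (F.card : ℝ) * ((T : ℝ) / 4) < T := by
    have := Finset.sum_lt_sum_of_nonempty hne (fun i _ => hlo i)
    rw [Finset.sum_const, nsmul_eq_mul, hcsum] at this
    exact this
  have h2 : (T : ℝ) < (F.card : ℝ) * ((T : ℝ) / 2) := by
    have := Finset.sum_lt_sum_of_nonempty hne (fun i _ => hhi i)
    rw [Finset.sum_const, nsmul_eq_mul, hcsum] at this
    exact this
  have h3 : (F.card : ℝ) < 4 := by nlinarith
  have h4 : (2 : ℝ) < (F.card : ℝ) := by nlinarith
  have h3' : F.card < 4 := by exact_mod_cast h3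
  have h4' : 2 < F.card := by exact_mod_cast h4
  omega


end Aux

set_option maxHeartbeats 2000000 in
theorem MSTSp_clustering_iff_three_partition (m T : ℕ) (hm : 2 ≤ m) (hT : 0 < T)
    (s : Fin (3 * m) → ℕ) (hs : ∀ i, 0 < s i)
    (hsum : ∑ i, s i = m * T)
    (hlo : ∀ i, (T : ℝ) / 4 < (s i : ℝ)) (hhi : ∀ i, (s i : ℝ) < (T : ℝ) / 2)
    (α : ℝ) (hα : 1 / 2 < α)
    (dist : (Σ i : Fin (3 * m), Fin (s i)) → (Σ i : Fin (3 * m), Fin (s i)) → ℝ)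
    (hdist : ∀ x y : (Σ i : Fin (3 * m), Fin (s i)),
      dist x y = if x.1 = y.1 then 1 / 2 else α) :
    (∃ 𝒞 : Set (Set (Σ i : Fin (3 * m), Fin (s i))),
        IsClustering 𝒞 ∧ 𝒞.ncard = m ∧ (∀ C ∈ 𝒞, T ≤ C.ncard) ∧
        MSTSp dist 𝒞 = (m - 1 : ℝ) * α) ↔
      ∃ f : Fin (3 * m) → Fin m, ∀ j : Fin m,
        (Finset.univ.filter (fun i => f i = j)).card = 3 ∧
        ∑ i ∈ Finset.univ.filter (fun i => f i = j), s i = T := by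
  have hd0 : ∀ x y, 0 ≤ dist x y := fun x y => by rw [hdist]; split <;> linarith
  have hdle : ∀ x y, dist x y ≤ α := fun x y => by rw [hdist]; split <;> linarith
  constructor
  · rintro ⟨𝒞, ⟨hne, hcov, hdisj⟩, hcard, hsize, hmst⟩
    have hVt : Fintype.card {A : Set (Σ i : Fin (3 * m), Fin (s i)) // A ∈ 𝒞} = m := by
      rw [← Nat.card_eq_fintype_card, Nat.card_coe_set_eq, hcard]
    have hmem : ∀ x : (Σ i : Fin (3 * m), Fin (s i)), ∃ A ∈ 𝒞, x ∈ A := by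
      intro x
      have : x ∈ ⋃₀ 𝒞 := by rw [hcov]; trivial
      exact this
    -- Step 1: every block is contained in a single group
    have hblock : ∀ (x y : (Σ i : Fin (3 * m), Fin (s i))), x.1 = y.1 →
        ∀ A ∈ 𝒞, x ∈ A → y ∈ A := by
      intro x y hxy A hA hxA
      by_contra hyA
      obtain ⟨B, hB, hyB⟩ := hmem y
      have hAB : A ≠ B := fun h => hyA (h ▸ hyB)
      set c : {A' : Set (Σ i : Fin (3 * m), Fin (s i)) // A' ∈ 𝒞} := ⟨A, hA⟩ with hc
      set b : {A' : Set (Σ i : Fin (3 * m), Fin (s i)) // A' ∈ 𝒞} := ⟨B, hB⟩ with hb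
      have hcb : c ≠ b := fun h => hAB (congrArg Subtype.val h)
      have hbmem : b ∈ Finset.univ.erase c :=
        Finset.mem_erase.mpr ⟨Ne.symm hcb, Finset.mem_univ _⟩
      have hstep : ∀ v : {A' : Set (Σ i : Fin (3 * m), Fin (s i)) // A' ∈ 𝒞},
          edgeWeight dist (Sym2.map Subtype.val s(c, v)) ≤ α := by
        intro v
        obtain ⟨x0, hx0⟩ := hne A hA
        obtain ⟨y0, hy0⟩ := hne v.1 v.2
        have heq : Sym2.map Subtype.val s(c, v) = s(A, v.1) := rfl
        rw [heq]
        exact le_trans (edgeWeight_le hd0 hx0 hy0) (hdle _ _)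
      have hcost : treeCost dist 𝒞 (starG c) ≤ 1 / 2 + ((m : ℝ) - 2) * α := by
        rw [treeCost_star]
        rw [← Finset.add_sum_erase _ _ hbmem]
        have h1 : edgeWeight dist (Sym2.map Subtype.val s(c, b)) ≤ 1 / 2 := by
          have heq : Sym2.map Subtype.val s(c, b) = s(A, B) := rfl
          rw [heq]
          calc edgeWeight dist s(A, B) ≤ dist x y := edgeWeight_le hd0 hxA hyB
            _ = 1 / 2 := by rw [hdist]; simp [hxy]
        have h2 : ∑ v ∈ (Finset.univ.erase c).erase b,
            edgeWeight dist (Sym2.map Subtype.val s(c, v)) ≤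
            ((Finset.univ.erase c).erase b).card • α :=
          Finset.sum_le_card_nsmul _ _ _ (fun v _ => hstep v)
        have hcd : ((Finset.univ.erase c).erase b).card = m - 2 := by
          rw [Finset.card_erase_of_mem hbmem, Finset.card_erase_of_mem (Finset.mem_univ c),
            Finset.card_univ, hVt]
          omega
        rw [hcd, nsmul_eq_mul] at h2
        have hm2 : ((m - 2 : ℕ) : ℝ) = (m : ℝ) - 2 := by
          have h2m : (2 : ℕ) ≤ m := hm
          push_cast [Nat.cast_sub h2m]
          ring
        rw [hm2] at h2
        linarith
      have hbdd : BddBelow {cc : ℝ |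
          ∃ T' : SimpleGraph {A' : Set (Σ i : Fin (3 * m), Fin (s i)) // A' ∈ 𝒞},
            T'.IsTree ∧ treeCost dist 𝒞 T' = cc} := by
        refine ⟨0, ?_⟩
        rintro r ⟨T', -, rfl⟩
        exact treeCost_nonneg hd0 T'
      have hle : MSTSp dist 𝒞 ≤ treeCost dist 𝒞 (starG c) :=
        csInf_le hbdd ⟨starG c, starG_isTree c, rfl⟩
      rw [hmst] at hle
      have hm2' : (2 : ℝ) ≤ (m : ℝ) := by exact_mod_cast hm
      nlinarith
    -- Step 2: the group of each block
    choose g hg1 hg2 using fun i : Fin (3 * m) => hmem ⟨i, ⟨0, hs i⟩⟩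
    set f' : Fin (3 * m) → {A' : Set (Σ i : Fin (3 * m), Fin (s i)) // A' ∈ 𝒞} :=
      fun i => ⟨g i, hg1 i⟩ with hf'
    have hmemf : ∀ x : (Σ i : Fin (3 * m), Fin (s i)), x ∈ (f' x.1).1 := by
      intro x
      exact hblock ⟨x.1, ⟨0, hs x.1⟩⟩ x rfl (g x.1) (hg1 x.1) (hg2 x.1)
    -- Step 3: groups are fibers
    have hCeq : ∀ (A : Set (Σ i : Fin (3 * m), Fin (s i))) (hA : A ∈ 𝒞),
        A = {x | f' x.1 = ⟨A, hA⟩} := by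
      intro A hA
      ext x
      simp only [Set.mem_setOf_eq]
      constructor
      · intro hxA
        have hAeq : A = (f' x.1).1 := by
          by_contra hne'
          exact Set.disjoint_left.mp (hdisj A hA (f' x.1).1 (f' x.1).2 hne') hxA (hmemf x)
        exact (Subtype.ext hAeq.symm)
      · intro h
        have hx := hmemf x
        rw [h] at hx
        exact hx
    -- Step 4: sizes
    set t : {A' : Set (Σ i : Fin (3 * m), Fin (s i)) // A' ∈ 𝒞} → ℕ :=
      fun v => ∑ i ∈ Finset.univ.filter (fun i => f' i = v), s i with ht
    have hncard : ∀ v : {A' : Set (Σ i : Fin (3 * m), Fin (s i)) // A' ∈ 𝒞},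
        (v.1).ncard = t v := by
      rintro ⟨A, hA⟩
      have h1 : A.ncard = ({x : Σ i : Fin (3 * m), Fin (s i) |
          f' x.1 = ⟨A, hA⟩} : Set (Σ i : Fin (3 * m), Fin (s i))).ncard :=
        congrArg Set.ncard (hCeq A hA)
      simp only [ht]
      rw [h1, ← Nat.card_coe_set_eq]
      exact card_sigma_subtype s (fun i => f' i = ⟨A, hA⟩)
    have hsumt : ∑ v : {A' : Set (Σ i : Fin (3 * m), Fin (s i)) // A' ∈ 𝒞}, t v = m * T := by
      simp only [ht]
      rw [Finset.sum_fiberwise]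
      exact hsum
    have htle : ∀ v : {A' : Set (Σ i : Fin (3 * m), Fin (s i)) // A' ∈ 𝒞}, T ≤ t v := by
      intro v
      rw [← hncard v]
      exact hsize v.1 v.2
    have hteq : ∀ v, t v = T := by
      refine all_eq_of_sum t T htle ?_
      rw [hVt]
      exact hsumt
    have hfib3 : ∀ v : {A' : Set (Σ i : Fin (3 * m), Fin (s i)) // A' ∈ 𝒞},
        (Finset.univ.filter (fun i => f' i = v)).card = 3 := by
      intro v
      refine fiber_card_three hT s _ hlo hhi ?_
      have h := hteq v
      simp only [ht] at h
      exact h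
    -- Step 5: build f
    have e := Fintype.equivFinOfCardEq hVt
    refine ⟨fun i => e (f' i), fun j => ?_⟩
    have hfe : (Finset.univ.filter (fun i => e (f' i) = j)) =
        (Finset.univ.filter (fun i => f' i = e.symm j)) := by
      apply Finset.filter_congr
      intro i _
      constructor
      · intro h; rw [← h]; simp
      · intro h; rw [h]; simp
    constructor
    · rw [hfe]; exact hfib3 (e.symm j)
    · rw [hfe]
      have h := hteq (e.symm j)
      simp only [ht] at h
      exact h
  · rintro ⟨f, hf⟩
    set Cst : Fin m → Set (Σ i : Fin (3 * m), Fin (s i)) := fun j => {x | f x.1 = j} with hCst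
    have hjpt : ∀ j, ∃ i, f i = j := by
      intro j
      have h3 := (hf j).1
      have hpos : (Finset.univ.filter (fun i => f i = j)).Nonempty := by
        rw [← Finset.card_pos, h3]; norm_num
      obtain ⟨i, hi⟩ := hpos
      exact ⟨i, (Finset.mem_filter.mp hi).2⟩
    have hCne : ∀ j, (Cst j).Nonempty := by
      intro j
      obtain ⟨i, hi⟩ := hjpt j
      exact ⟨⟨i, ⟨0, hs i⟩⟩, hi⟩
    have hCinj : Function.Injective Cst := by
      intro j j' h
      obtain ⟨x, hx⟩ := hCne j
      have hx' : x ∈ Cst j' := h ▸ hx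
      have h1 : f x.1 = j := hx
      have h2 : f x.1 = j' := hx'
      exact h1.symm.trans h2
    have hVt : Fintype.card {A : Set (Σ i : Fin (3 * m), Fin (s i)) // A ∈ Set.range Cst}
        = m := by
      rw [← Nat.card_eq_fintype_card, Nat.card_coe_set_eq, ← Set.image_univ,
        Set.ncard_image_of_injective _ hCinj, Set.ncard_univ, Nat.card_eq_fintype_card,
        Fintype.card_fin]
    refine ⟨Set.range Cst, ⟨?_, ?_, ?_⟩, ?_, ?_, ?_⟩
    · rintro A ⟨j, rfl⟩; exact hCne j
    · ext x
      simp only [Set.mem_sUnion, Set.mem_univ, iff_true]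
      exact ⟨Cst (f x.1), ⟨f x.1, rfl⟩, rfl⟩
    · rintro A ⟨j, rfl⟩ B ⟨j', rfl⟩ hne'
      have hjj : j ≠ j' := fun h => hne' (congrArg Cst h)
      rw [Set.disjoint_left]
      intro x hx hx'
      have h1 : f x.1 = j := hx
      have h2 : f x.1 = j' := hx'
      exact hjj (h1.symm.trans h2)
    · rw [← Set.image_univ, Set.ncard_image_of_injective _ hCinj, Set.ncard_univ,
        Nat.card_eq_fintype_card, Fintype.card_fin]
    · rintro A ⟨j, rfl⟩
      have hcnt : (Cst j).ncard = ∑ i ∈ Finset.univ.filter (fun i => f i = j), s i := by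
        rw [← Nat.card_coe_set_eq]
        exact card_sigma_subtype s (fun i => f i = j)
      rw [hcnt, (hf j).2]
    · have hcross : ∀ (j j' : Fin m), j ≠ j' → ∀ x ∈ Cst j, ∀ y ∈ Cst j', dist x y = α := by
        intro j j' hjj x hx y hy
        rw [hdist, if_neg]
        intro h
        apply hjj
        have hx' : f x.1 = j := hx
        have hy' : f y.1 = j' := hy
        rw [← hx', ← hy', h]
      have hwα : ∀ (T' : SimpleGraph {A : Set (Σ i : Fin (3 * m), Fin (s i)) //
          A ∈ Set.range Cst}), ∀ e ∈ T'.edgeSet,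
          edgeWeight dist (Sym2.map Subtype.val e) = α := by
        intro T' e he
        induction e using Sym2.ind with
        | _ u v =>
          have hadj : T'.Adj u v := he
          have huv : u.1 ≠ v.1 := fun h => hadj.ne (Subtype.ext h)
          obtain ⟨j, hj⟩ := u.2
          obtain ⟨j', hj'⟩ := v.2
          have hjj : j ≠ j' := fun h => huv (by rw [← hj, ← hj', h])
          have heq : Sym2.map Subtype.val s(u, v) = s(u.1, v.1) := rfl
          rw [heq, ← hj, ← hj']
          exact edgeWeight_const (hCne j) (hCne j') (hcross j j' hjj)
            (fun y hy x hx => hcross j' j (Ne.symm hjj) y hy x hx)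
      have hall : ∀ T' : SimpleGraph {A : Set (Σ i : Fin (3 * m), Fin (s i)) //
          A ∈ Set.range Cst}, T'.IsTree →
          treeCost dist (Set.range Cst) T' = ((m : ℝ) - 1) * α :=
        fun T' h => treeCost_const T' h hVt (hwα T')
      have hv0 : Nonempty {A : Set (Σ i : Fin (3 * m), Fin (s i)) // A ∈ Set.range Cst} := by
        rw [← Fintype.card_pos_iff, hVt]; omega
      obtain ⟨v0⟩ := hv0
      have hset : {c : ℝ | ∃ T' : SimpleGraph {A : Set (Σ i : Fin (3 * m), Fin (s i)) //
          A ∈ Set.range Cst}, T'.IsTree ∧ treeCost dist (Set.range Cst) T' = c}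
          = {((m : ℝ) - 1) * α} := by
        ext c
        simp only [Set.mem_setOf_eq, Set.mem_singleton_iff]
        constructor
        · rintro ⟨T', h1, rfl⟩; exact hall T' h1
        · rintro rfl; exact ⟨starG v0, starG_isTree v0, hall _ (starG_isTree v0)⟩
      unfold MSTSp
      rw [hset, csInf_singleton]


end ClusterSpacing
end
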